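/- Let q > 1 and p coprime to q with p ≢ ±1 (mod q), p′ = (−p) mod q, p″ = (−p^{−1}) mod q, and assume 1 < p′ < q/2. Then p″ ≤ q − 2, and the open segment from (p′,1) to (p′+1, p″+1) separates the points (2p′, 2) and (1, p″) within the square [0,q]²; consequently any Y-monotone lattice path through all points (i·p′ mod q, i), 1 ≤ i ≤ q−1, crosses the segment from (p′,1) to (p′+1, p″+1) improperly. -/

import Mathlib

/-- Discrete intermediate value: a function with a strict sign change and no zeros
on the interval has an adjacent sign change. -/
lemma exists_sign_change_aux (f : ℤ → ℤ) (a b : ℤ) (hab : a < b)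
    (hfa : f a < 0) (hfb : 0 < f b)
    (hnz : ∀ i, a ≤ i → i ≤ b → f i ≠ 0) :
    ∃ i, a ≤ i ∧ i < b ∧ f i < 0 ∧ 0 < f (i + 1) := by
  have hbdd : ∃ c : ℤ, ∀ z : ℤ, (a < z ∧ z ≤ b ∧ 0 < f z) → c ≤ z := ⟨a, fun z hz => hz.1.le⟩
  have hne : ∃ z : ℤ, (a < z ∧ z ≤ b ∧ 0 < f z) := ⟨b, hab, le_refl b, hfb⟩
  obtain ⟨m, ⟨ham, hmb, hfm⟩, hmin⟩ := Int.exists_least_of_bdd hbdd hne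
  refine ⟨m - 1, by omega, by omega, ?_, by simpa using hfm⟩
  rcases eq_or_lt_of_le (by omega : a ≤ m - 1) with h | h
  · rwa [← h]
  · have h1 : f (m - 1) ≠ 0 := hnz _ (by omega) (by omega)
    rcases lt_trichotomy (f (m - 1)) 0 with h2 | h2 | h2
    · exact h2
    · exact absurd h2 h1
    · have := hmin (m - 1) ⟨h, by omega, h2⟩; omega

/-- For `p ≢ ±1 (mod q)`, with `p' = (-p) mod q`, `p'' = (-p⁻¹) mod q`
and `1 < p' < q/2`, we have `p'' ≤ q - 2`, the points `(2p',2)` and `(1,p'')` lie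
strictly on opposite sides of the line through `(p',1)` and `(p'+1,p''+1)`, and
consequently the Y-monotone polygonal path through all points `(i·p' mod q, i)`,
`1 ≤ i ≤ q-1`, crosses the open segment from `(p',1)` to `(p'+1,p''+1)`. -/
theorem xpath_ypath_incompatible
    (p q r p' p'' : ℤ) (hq : 1 < q) (hp : 0 < p) (hpq : p < q) (hco : IsCoprime p q)
    (hr : p * r ≡ 1 [ZMOD q])
    (hp1 : ¬ p ≡ 1 [ZMOD q]) (hpm1 : ¬ p ≡ -1 [ZMOD q])
    (hp' : p' = (-p) % q) (hp'' : p'' = (-r) % q)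
    (hp'1 : 1 < p') (hp'q : 2 * p' < q) :
    p'' ≤ q - 2 ∧
    (p'' * (2 * p' - p') - (2 - 1)) * (p'' * (1 - p') - (p'' - 1)) < 0 ∧
    ∃ i : ℤ, 1 ≤ i ∧ i ≤ q - 2 ∧
      (openSegment ℝ (![(p' : ℝ), 1]) (![(p' : ℝ) + 1, (p'' : ℝ) + 1]) ∩
        openSegment ℝ (![(((i * p') % q : ℤ) : ℝ), (i : ℝ)])
          (![((((i + 1) * p') % q : ℤ) : ℝ), ((i : ℝ) + 1)])).Nonempty := by
  have hq0 : (0 : ℤ) < q := by omega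
  have hqne : q ≠ 0 := by omega
  -- basic bounds
  have hp''0 : 0 ≤ p'' := hp'' ▸ Int.emod_nonneg _ hqne
  have hp''q : p'' < q := hp'' ▸ Int.emod_lt_of_pos _ hq0
  have hp'q' : p' < q := by omega
  -- p'' * p' ≡ 1 (mod q)
  have hmod : p'' * p' ≡ (-r) * (-p) [ZMOD q] := by
    refine Int.ModEq.mul ?_ ?_
    · exact hp'' ▸ Int.emod_emod_of_dvd (-r) dvd_rfl
    · exact hp' ▸ Int.emod_emod_of_dvd (-p) dvd_rfl
  have hmod1 : p'' * p' ≡ 1 [ZMOD q] := by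
    calc p'' * p' ≡ (-r) * (-p) [ZMOD q] := hmod
      _ = p * r := by ring
      _ ≡ 1 [ZMOD q] := hr
  obtain ⟨k0, hk0⟩ : q ∣ 1 - p'' * p' := hmod1.dvd
  obtain ⟨k, hk⟩ : ∃ k : ℤ, p'' * p' - 1 = q * k := ⟨-k0, by linear_combination -hk0⟩
  clear hk0
  -- p'' ≥ 3 and p'' ≤ q - 2
  have habs : ∀ x : ℤ, q ∣ x → |x| < q → x = 0 := fun x h1 h2 => Int.eq_zero_of_abs_lt_dvd h1 h2
  have hp''ne0 : p'' ≠ 0 := by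
    intro h
    subst h
    have : (-1 : ℤ) = 0 := by
      refine habs _ ⟨k, by linarith [hk]⟩ ?_
      rw [abs_of_nonpos (by omega : (-1:ℤ) ≤ 0)]; omega
    omega
  have hp''ne1 : p'' ≠ 1 := by
    intro h
    subst h
    have : p' - 1 = 0 := by
      refine habs _ ⟨k, by linarith [hk]⟩ ?_
      rw [abs_of_nonneg (by omega : (0:ℤ) ≤ p' - 1)]; omega
    omega
  have hp''ne2 : p'' ≠ 2 := by
    intro h
    subst h
    have : 2 * p' - 1 = 0 := by
      refine habs _ ⟨k, by linarith [hk]⟩ ?_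
      rw [abs_of_nonneg (by omega : (0:ℤ) ≤ 2 * p' - 1)]; omega
    omega
  have hp''3 : 3 ≤ p'' := by omega
  have hp''le : p'' ≤ q - 2 := by
    rcases eq_or_lt_of_le (by omega : p'' ≤ q - 1) with h | h
    · exfalso
      have h1 : p' + 1 = 0 := by
        refine habs _ ⟨p' - k, by linear_combination -hk + p' * h⟩ ?_
        rw [abs_of_nonneg (by omega : (0:ℤ) ≤ p' + 1)]; omega
      omega
    · omega
  have hpp'1 : 1 < p'' * p' := by nlinarith
  have hx1pos : 0 < p'' * p' - 1 := by omega
  refine ⟨hp''le, by nlinarith [mul_pos hx1pos hx1pos], ?_⟩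
  -- the sign function along the path
  set f : ℤ → ℤ := fun i => (i - 1) - p'' * ((i * p') % q - p') with hf
  have hf2 : f 2 < 0 := by
    have h2p : (2 * p') % q = 2 * p' := Int.emod_eq_of_lt (by omega) hp'q
    simp only [hf]
    rw [h2p]
    nlinarith
  have hfp'' : 0 < f p'' := by
    have hpp : (p'' * p') % q = 1 := by
      have h1 : p'' * p' = 1 + q * k := by omega
      rw [h1, Int.add_mul_emod_self_left, Int.emod_eq_of_lt (by omega) hq]
    simp only [hf]
    rw [hpp]
    nlinarith
  have hnz : ∀ i, 2 ≤ i → i ≤ p'' → f i ≠ 0 := by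
    intro i h1 h2 h0
    simp only [hf] at h0
    have hdvd : p'' ∣ i - 1 := ⟨(i * p') % q - p', by omega⟩
    have := Int.le_of_dvd (by omega) hdvd
    omega
  obtain ⟨i, hi2, hip, hfi, hfi1⟩ := exists_sign_change_aux f 2 p'' (by omega) hf2 hfp'' hnz
  simp only [hf] at hfi hfi1
  refine ⟨i, by omega, by omega, ?_⟩
  -- real setup
  have hppR : (0 : ℝ) < (p'' : ℝ) := by exact_mod_cast (by omega : (0:ℤ) < p'')
  have hppne : (p'' : ℝ) ≠ 0 := ne_of_gt hppR
  obtain ⟨A, hA⟩ : ∃ A : ℝ, A = ((i : ℝ) - 1) - (p'' : ℝ) * ((((i * p') % q : ℤ) : ℝ) - (p' : ℝ)) :=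
    ⟨_, rfl⟩
  obtain ⟨B, hB⟩ : ∃ B : ℝ, B = (i : ℝ) - (p'' : ℝ) * (((((i + 1) * p') % q : ℤ) : ℝ) - (p' : ℝ)) :=
    ⟨_, rfl⟩
  have hA0 : A < 0 := by
    have h1 : ((i - 1 - p'' * ((i * p') % q - p') : ℤ) : ℝ) < 0 := by exact_mod_cast hfi
    push_cast at h1
    rw [hA]; linarith
  have hB0 : 0 < B := by
    have h1 : (0 : ℝ) < ((i + 1 - 1 - p'' * (((i + 1) * p') % q - p') : ℤ) : ℝ) := by
      exact_mod_cast hfi1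
    push_cast at h1
    rw [hB]; linarith
  have hAB : A - B < 0 := by linarith
  have hABne : A - B ≠ 0 := ne_of_lt hAB
  obtain ⟨s, hs⟩ : ∃ s : ℝ, s = A / (A - B) := ⟨_, rfl⟩
  obtain ⟨t, ht⟩ : ∃ t : ℝ, t = ((i : ℝ) + s - 1) / (p'' : ℝ) := ⟨_, rfl⟩
  have hs0 : 0 < s := hs ▸ div_pos_of_neg_of_neg hA0 hAB
  have hs1 : s < 1 := by
    have hseq : s = 1 + B / (A - B) := by rw [hs]; field_simp; ring
    rw [hseq]
    linarith [div_neg_of_pos_of_neg hB0 hAB]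
  have hii2 : (2 : ℝ) ≤ (i : ℝ) := by exact_mod_cast hi2
  have hiip : (i : ℝ) ≤ (p'' : ℝ) - 1 := by
    have h1 : (i : ℝ) ≤ ((p'' : ℤ) : ℝ) - 1 := by exact_mod_cast (by omega : i ≤ p'' - 1)
    exact_mod_cast h1
  have ht0 : 0 < t := ht ▸ div_pos (by linarith) hppR
  have ht1 : t < 1 := by rw [ht]; exact (div_lt_one hppR).mpr (by linarith)
  have htp : t * (p'' : ℝ) = (i : ℝ) + s - 1 := by rw [ht]; exact div_mul_cancel₀ _ hppne
  have hsab : s * (A - B) = A := by rw [hs]; exact div_mul_cancel₀ _ hABne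
  rw [hA, hB] at hsab
  refine ⟨(1 - s) • ![(((i * p') % q : ℤ) : ℝ), (i : ℝ)]
      + s • ![((((i + 1) * p') % q : ℤ) : ℝ), ((i : ℝ) + 1)],
    ⟨1 - t, t, by linarith, ht0, by ring, ?_⟩,
    ⟨1 - s, s, by linarith, hs0, by ring, rfl⟩⟩
  funext j
  fin_cases j <;>
    simp only [Pi.add_apply, Pi.smul_apply, Fin.zero_eta, Fin.mk_one, Fin.isValue,
      Matrix.cons_val_zero, Matrix.cons_val_one, Matrix.head_cons, smul_eq_mul]
  · -- x coordinate
    refine mul_left_cancel₀ hppne ?_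
    linear_combination htp - hsab
  · -- y coordinate
    linear_combination htp
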